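/- The number of bubbles of size at most 2n-2, counted across all linear chord diagrams on 2n vertices, is asymptotic to (2 - e^{-1})·(2n-1)!!: the sequence n ↦ (∑_{p=1}^{2n-2} B_{n,p}) / (2n-1)!! tends to 2 - e^{-1} as n → ∞, where (2n-1)!! = (2n)!/(2^n·n!) and e is Euler's number. -/

import Mathlib

open Finset

/-- A linear chord diagram on `2*n` vertices: a fixed-point-free involution of `Fin (2*n)`.
Vertex `v ∈ {1,...,2n}` is represented by the index `v-1 : Fin (2*n)`. -/
def IsLCD (n : ℕ) (f : Fin (2*n) → Fin (2*n)) : Prop :=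
  ∀ i, f (f i) = i ∧ f i ≠ i

/-- The chord `{i, i+1}` (1-based vertices) is a short chord of `f`. -/
def IsShort (n : ℕ) (f : Fin (2*n) → Fin (2*n)) (i : ℕ) : Prop :=
  ∃ (_h1 : 1 ≤ i) (h2 : i < 2*n), f ⟨i-1, by omega⟩ = ⟨i, h2⟩

/-- The interval `[a,b] ⊆ {1,...,2n}` (1-based) is a bubble of the diagram `f`:
it contains no short chord, its left end is the start of the diagram or is preceded
by the short chord `{a-2,a-1}`, and its right end is the end of the diagram or is
followed by the short chord `{b+1,b+2}`. -/
def IsBubble (n : ℕ) (f : Fin (2*n) → Fin (2*n)) (a b : ℕ) : Prop :=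
  1 ≤ a ∧ a ≤ b ∧ b ≤ 2*n ∧
  (∀ i, a ≤ i → i + 1 ≤ b → ¬ IsShort n f i) ∧
  (a = 1 ∨ IsShort n f (a-2)) ∧
  (b = 2*n ∨ IsShort n f (b+1))

open scoped Classical in
/-- `B n p` : the number of pairs `(D, [a,b])` where `D` is a linear chord diagram on
`2n` vertices and `[a,b]` is a bubble of `D` of size `p = b - a + 1`. -/
noncomputable def B (n p : ℕ) : ℕ :=
  ((univ ×ˢ (Finset.Icc 1 (2*n) ×ˢ Finset.Icc 1 (2*n))).filter
    (fun x : (Fin (2*n) → Fin (2*n)) × ℕ × ℕ =>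
      IsLCD n x.1 ∧ IsBubble n x.1 x.2.1 x.2.2 ∧ x.2.2 - x.2.1 + 1 = p)).card

open scoped Classical in
/-- `d n s` : the number of linear chord diagrams on `2n` vertices having exactly `s`
short chords. -/
noncomputable def d (n s : ℕ) : ℕ :=
  (univ.filter (fun f : Fin (2*n) → Fin (2*n) =>
    IsLCD n f ∧ ((Finset.Icc 1 (2*n-1)).filter (fun i => IsShort n f i)).card = s)).card

open scoped Classical in
/-- `pathMatch m j` : the number of `j`-edge matchings of the path graph on `m` vertices
`{1,...,m}` with edges `{i,i+1}`, `1 ≤ i ≤ m-1`.  An edge is encoded by its left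
endpoint; a set of edges is a matching iff no two left endpoints are consecutive. -/
noncomputable def pathMatch (m j : ℕ) : ℕ :=
  (((Finset.Icc 1 (m-1)).powerset).filter
    (fun S => S.card = j ∧ ∀ i ∈ S, i + 1 ∉ S)).card

/-- The double factorial `(2m-1)!! = (2m)! / (2^m * m!)`, so `(-1)!! = 1`. -/
def doubleFact (m : ℕ) : ℕ := (2*m).factorial / (2^m * m.factorial)

private def df : ℕ → ℕ
  | 0 => 1
  | m+1 => (2*m+1) * df m

private lemma df_spec (m : ℕ) : df m * (2^m * m.factorial) = (2*m).factorial := by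
  induction m with
  | zero => simp [df]
  | succ m ih =>
      have h2 : 2*(m+1) = 2*m+1+1 := by ring
      rw [df, h2, Nat.factorial_succ, Nat.factorial_succ]
      rw [show 2*m+1+1 = 2*(m+1) by ring] at *
      calc (2*m+1) * df m * (2^(m+1) * ((m+1) * m.factorial))
          = (2*m+1) * (2*(m+1)) * (df m * (2^m * m.factorial)) := by ring
        _ = (2*m+1) * (2*(m+1)) * (2*m).factorial := by rw [ih]
        _ = (2*(m+1)) * ((2*m+1) * (2*m).factorial) := by ring

private lemma doubleFact_eq_df (m : ℕ) : doubleFact m = df m := by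
  have h := df_spec m
  have hpos : 0 < 2^m * m.factorial := Nat.mul_pos (Nat.pow_pos (by norm_num)) m.factorial_pos
  rw [doubleFact, ← h, Nat.mul_div_cancel _ hpos]

lemma doubleFact_zero : doubleFact 0 = 1 := by rw [doubleFact_eq_df]; rfl

lemma doubleFact_succ (m : ℕ) : doubleFact (m+1) = (2*m+1) * doubleFact m := by
  rw [doubleFact_eq_df, doubleFact_eq_df]; rfl

lemma doubleFact_pos (m : ℕ) : 0 < doubleFact m := by
  induction m with
  | zero => rw [doubleFact_zero]; norm_num
  | succ m ih => rw [doubleFact_succ]; positivity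

open scoped Classical in
noncomputable def InvOn {α : Type*} [Fintype α] [DecidableEq α] (s : Finset α) : Finset (α → α) :=
  univ.filter (fun f => (∀ x ∈ s, f x ∈ s ∧ f (f x) = x ∧ f x ≠ x) ∧ ∀ x ∉ s, f x = x)

lemma invOn_card {α : Type*} [Fintype α] [DecidableEq α] :
    ∀ (m : ℕ) (s : Finset α), s.card = 2*m → (InvOn s).card = doubleFact m := by
  intro m
  induction m with
  | zero =>
      intro s hs
      rw [Nat.mul_zero, Finset.card_eq_zero] at hs
      subst hs
      rw [doubleFact_zero, Finset.card_eq_one]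
      refine ⟨id, ?_⟩
      ext f
      simp only [InvOn, mem_filter, mem_univ, true_and, notMem_empty, mem_singleton]
      constructor
      · rintro ⟨-, h2⟩; funext x; exact h2 x (by simp)
      · rintro rfl; exact ⟨by simp, fun x _ => rfl⟩
  | succ m ih =>
      intro s hs
      have hne : s.Nonempty := by rw [← Finset.card_pos, hs]; omega
      obtain ⟨a, ha⟩ := hne
      classical
      have hfib : ∀ f ∈ InvOn s, f a ∈ s.erase a := by
        intro f hf
        simp only [InvOn, mem_filter] at hf
        obtain ⟨-, h1, -⟩ := hf
        exact Finset.mem_erase.2 ⟨(h1 a ha).2.2, (h1 a ha).1⟩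
      rw [Finset.card_eq_sum_card_fiberwise hfib]
      have hcard : ∀ b ∈ s.erase a,
          ((InvOn s).filter (fun f => f a = b)).card = doubleFact m := by
        intro b hb
        obtain ⟨hba, hbs⟩ := Finset.mem_erase.1 hb
        set t := (s.erase a).erase b with ht
        have htcard : t.card = 2*m := by
          rw [ht, Finset.card_erase_of_mem hb, Finset.card_erase_of_mem ha, hs]; omega
        have hmem : ∀ x, x ∈ t ↔ x ∈ s ∧ x ≠ a ∧ x ≠ b := by
          intro x; simp only [ht, Finset.mem_erase]; tauto
        rw [← ih t htcard]
        apply Finset.card_bij' (fun f _ => fun x => if x = a ∨ x = b then x else f x)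
          (fun g _ => fun x => if x = a then b else if x = b then a else g x)
        · -- forward maps into InvOn t
          intro f hf
          simp only [mem_filter] at hf
          obtain ⟨hfI, hfa⟩ := hf
          simp only [InvOn, mem_filter, mem_univ, true_and] at hfI ⊢
          obtain ⟨h1, h2⟩ := hfI
          have hfb : f b = a := by rw [← hfa]; exact (h1 a ha).2.1
          have key : ∀ x ∈ t, f x ∈ t := by
            intro x hx
            rw [hmem] at hx ⊢
            obtain ⟨hxs, hxa, hxb⟩ := hx
            refine ⟨(h1 x hxs).1, ?_, ?_⟩
            · intro h; apply hxb; rw [← (h1 x hxs).2.1, h, hfa]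
            · intro h; apply hxa; rw [← (h1 x hxs).2.1, h, hfb]
          constructor
          · intro x hx
            have hxa : x ≠ a ∧ x ≠ b := by rw [hmem] at hx; tauto
            rw [if_neg (by tauto)]
            have hfx := key x hx
            have : ¬ (f x = a ∨ f x = b) := by rw [hmem] at hfx; tauto
            rw [if_neg this]
            have hxs : x ∈ s := by rw [hmem] at hx; tauto
            exact ⟨hfx, (h1 x hxs).2.1, (h1 x hxs).2.2⟩
          · intro x hx
            by_cases hab : x = a ∨ x = b
            · rw [if_pos hab]
            · rw [if_neg hab]
              apply h2
              intro hxs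
              exact hx ((hmem x).2 ⟨hxs, by tauto⟩)
        · -- backward maps into filter
          intro g hg
          simp only [InvOn, mem_filter, mem_univ, true_and] at hg
          obtain ⟨h1, h2⟩ := hg
          have hgt : ∀ x ∈ t, g x ∈ t := fun x hx => (h1 x hx).1
          simp only [mem_filter, InvOn, mem_univ, true_and]
          refine ⟨⟨?_, ?_⟩, ?_⟩
          · intro x hxs
            by_cases hxa : x = a
            · subst hxa
              rw [if_pos rfl]
              refine ⟨hbs, ?_, hba⟩
              rw [if_neg hba, if_pos rfl]
            · by_cases hxb : x = b
              · subst hxb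
                rw [if_neg hxa, if_pos rfl]
                refine ⟨ha, ?_, fun h => hxa h.symm⟩
                rw [if_pos rfl]
              · have hxt : x ∈ t := (hmem x).2 ⟨hxs, hxa, hxb⟩
                rw [if_neg hxa, if_neg hxb]
                have hgx := hgt x hxt
                have hgxa : g x ≠ a := by rw [hmem] at hgx; tauto
                have hgxb : g x ≠ b := by rw [hmem] at hgx; tauto
                rw [if_neg hgxa, if_neg hgxb]
                refine ⟨((hmem _).1 hgx).1, (h1 x hxt).2.1, (h1 x hxt).2.2⟩
          · intro x hxs
            have hxa : x ≠ a := fun h => hxs (h ▸ ha)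
            have hxb : x ≠ b := fun h => hxs (h ▸ hbs)
            rw [if_neg hxa, if_neg hxb]
            exact h2 x (fun hxt => hxs ((hmem x).1 hxt).1)
          · simp
        · -- left inverse
          intro f hf
          simp only [mem_filter, InvOn, mem_univ, true_and] at hf
          obtain ⟨⟨h1, h2⟩, hfa⟩ := hf
          funext x
          dsimp only
          by_cases hxa : x = a
          · subst hxa; rw [if_pos rfl, hfa]
          · by_cases hxb : x = b
            · subst hxb; rw [if_neg hxa, if_pos rfl, ← hfa]
              exact ((h1 a ha).2.1).symm
            · rw [if_neg hxa, if_neg hxb, if_neg (by tauto)]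
        · -- right inverse
          intro g hg
          simp only [InvOn, mem_filter, mem_univ, true_and] at hg
          obtain ⟨h1, h2⟩ := hg
          funext x
          dsimp only
          by_cases hab : x = a ∨ x = b
          · rw [if_pos hab]
            rcases hab with rfl | rfl
            · exact (h2 _ (by rw [hmem]; tauto)).symm
            · exact (h2 _ (by rw [hmem]; tauto)).symm
          · rw [if_neg hab]
            push_neg at hab
            rw [if_neg hab.1, if_neg hab.2]
      rw [Finset.sum_congr rfl hcard, Finset.sum_const,
        Finset.card_erase_of_mem ha, hs, doubleFact_succ]
      simp [Nat.mul_comm]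
      omega


open scoped Classical in
noncomputable def Aset (n : ℕ) (S : Finset ℕ) : Finset (Fin (2*n) → Fin (2*n)) :=
  univ.filter (fun f => IsLCD n f ∧ ∀ t ∈ S, IsShort n f t)

lemma short_bounds {n : ℕ} {f : Fin (2*n) → Fin (2*n)} {i : ℕ} (h : IsShort n f i) :
    1 ≤ i ∧ i < 2*n := by obtain ⟨h1, h2, -⟩ := h; exact ⟨h1, h2⟩

lemma short_val {n : ℕ} {f : Fin (2*n) → Fin (2*n)} {i : ℕ} (h : IsShort n f i)
    (x : Fin (2*n)) (hx : (x:ℕ) = i - 1) : ((f x : Fin (2*n)) : ℕ) = i := by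
  obtain ⟨h1, h2, hfi⟩ := h
  have : x = ⟨i-1, by omega⟩ := Fin.ext (by simpa using hx)
  rw [this, hfi]

lemma short_val' {n : ℕ} {f : Fin (2*n) → Fin (2*n)} (hf : IsLCD n f) {i : ℕ}
    (h : IsShort n f i) (x : Fin (2*n)) (hx : (x:ℕ) = i) : ((f x : Fin (2*n)) : ℕ) = i - 1 := by
  obtain ⟨h1, h2, hfi⟩ := h
  have hxe : x = f ⟨i-1, by omega⟩ := by rw [hfi]; exact Fin.ext (by simpa using hx)
  rw [hxe, (hf _).1]

lemma short_not_succ {n : ℕ} {f : Fin (2*n) → Fin (2*n)} (hf : IsLCD n f) {i : ℕ}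
    (h : IsShort n f i) : ¬ IsShort n f (i+1) := by
  have hb := short_bounds h
  rintro hs
  have h2 := short_val hs ⟨i, hb.2⟩ rfl
  have h3 := short_val' hf h ⟨i, hb.2⟩ rfl
  omega

lemma card_Aset (n : ℕ) (S : Finset ℕ) (hS : S ⊆ Finset.Icc 1 (2*n-1))
    (hno : ∀ i ∈ S, i+1 ∉ S) :
    S.card ≤ n ∧ (Aset n S).card = doubleFact (n - S.card) := by
  classical
  have hSlt : ∀ t ∈ S, 1 ≤ t ∧ t < 2*n := by
    intro t ht
    have := Finset.mem_Icc.1 (hS ht)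
    omega
  set P : Finset (Fin (2*n)) := univ.filter (fun x => ((x:ℕ)+1 ∈ S ∨ (x:ℕ) ∈ S)) with hPdef
  have hPmem : ∀ x : Fin (2*n), x ∈ P ↔ ((x:ℕ)+1 ∈ S ∨ (x:ℕ) ∈ S) := by
    intro x; simp [hPdef]
  have hPcard : P.card = 2 * S.card := by
    have hP : P = S.biUnion (fun t => univ.filter (fun x : Fin (2*n) => (x:ℕ) = t-1 ∨ (x:ℕ) = t)) := by
      ext x
      rw [hPmem]
      simp only [Finset.mem_biUnion, mem_filter, mem_univ, true_and]
      constructor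
      · rintro (h | h)
        · exact ⟨(x:ℕ)+1, h, Or.inl (by omega)⟩
        · exact ⟨(x:ℕ), h, Or.inr rfl⟩
      · rintro ⟨t, ht, h | h⟩
        · have ht1 := (hSlt t ht).1
          have hxt : (x:ℕ)+1 = t := by omega
          exact Or.inl (hxt ▸ ht)
        · exact Or.inr (h ▸ ht)
    rw [hP, Finset.card_biUnion]
    · have hc2 : ∀ t ∈ S, (univ.filter (fun x : Fin (2*n) => (x:ℕ) = t-1 ∨ (x:ℕ) = t)).card = 2 := by
        intro t ht
        have h1 := (hSlt t ht).1
        have h2 := (hSlt t ht).2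
        have he : (univ.filter (fun x : Fin (2*n) => (x:ℕ) = t-1 ∨ (x:ℕ) = t))
            = {(⟨t-1, by omega⟩ : Fin (2*n)), ⟨t, h2⟩} := by
          ext x
          simp only [mem_filter, mem_univ, true_and, Finset.mem_insert, Finset.mem_singleton,
            Fin.ext_iff]
        rw [he, Finset.card_insert_of_notMem, Finset.card_singleton]
        simp only [Finset.mem_singleton, Fin.ext_iff]
        omega
      rw [Finset.sum_congr rfl hc2, Finset.sum_const, smul_eq_mul, mul_comm]
    · intro t ht t' ht' htt'
      rw [Function.onFun_apply, Finset.disjoint_left]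
      intro x hx hx'
      simp only [mem_filter, mem_univ, true_and] at hx hx'
      have h1 := hSlt t ht
      have h1' := hSlt t' ht'
      rcases hx with h | h <;> rcases hx' with h' | h'
      · omega
      · -- x = t-1, x = t' : t = t'+1 contradicts hno t'
        exact hno t' ht' (by rw [show t'+1 = t by omega]; exact ht)
      · exact hno t ht (by rw [show t+1 = t' by omega]; exact ht')
      · omega
  have hSn : S.card ≤ n := by
    have := Finset.card_le_univ P
    simp only [Finset.card_univ, Fintype.card_fin] at this
    omega
  have hPc : Pᶜ.card = 2 * (n - S.card) := by
    rw [Finset.card_compl, Fintype.card_fin, hPcard]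
    omega
  refine ⟨hSn, ?_⟩
  -- the partner function
  set pt : Fin (2*n) → Fin (2*n) := fun x =>
    if h : (x:ℕ)+1 ∈ S then ⟨(x:ℕ)+1, (hSlt _ h).2⟩
    else if h2 : (x:ℕ) ∈ S then ⟨(x:ℕ)-1, lt_of_le_of_lt (Nat.sub_le _ _) x.isLt⟩
    else x with hptdef
  have hpt1 : ∀ x : Fin (2*n), (x:ℕ)+1 ∈ S → ((pt x) : ℕ) = (x:ℕ)+1 := by
    intro x h
    rw [hptdef]; dsimp only; rw [dif_pos h]
  have hpt2 : ∀ x : Fin (2*n), (x:ℕ) ∈ S → ((pt x) : ℕ) = (x:ℕ)-1 := by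
    intro x h
    have hne : ¬ ((x:ℕ)+1 ∈ S) := hno _ h
    rw [hptdef]; dsimp only; rw [dif_neg hne, dif_pos h]
  have hptP : ∀ x, x ∈ P → (pt x ∈ P ∧ pt (pt x) = x ∧ pt x ≠ x) := by
    intro x hx
    rcases (hPmem x).1 hx with h | h
    · have v1 := hpt1 x h
      have hmem : ((pt x):ℕ) ∈ S := by rw [v1]; exact h
      have hnotnext : ¬ (((pt x):ℕ)+1 ∈ S) := hno _ hmem
      have v2 := hpt2 (pt x) hmem
      refine ⟨(hPmem _).2 (Or.inr hmem), Fin.ext (by omega), ?_⟩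
      intro he
      have : ((pt x):ℕ) = (x:ℕ) := by rw [he]
      omega
    · have h1 := (hSlt _ h).1
      have v1 := hpt2 x h
      have hmem : ((pt x):ℕ)+1 ∈ S := by rw [v1]; rwa [show (x:ℕ)-1+1 = (x:ℕ) by omega]
      have v2 := hpt1 (pt x) hmem
      refine ⟨(hPmem _).2 (Or.inl hmem), Fin.ext (by omega), ?_⟩
      intro he
      have : ((pt x):ℕ) = (x:ℕ) := by rw [he]
      omega
  have hfpt : ∀ f, IsLCD n f → (∀ t ∈ S, IsShort n f t) → ∀ x ∈ P, f x = pt x := by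
    intro f hlcd hsh x hx
    rcases (hPmem x).1 hx with h | h
    · have := short_val (hsh _ h) x (by omega)
      exact Fin.ext (by rw [this, hpt1 x h])
    · have := short_val' hlcd (hsh _ h) x rfl
      exact Fin.ext (by rw [this, hpt2 x h])
  rw [← invOn_card (n - S.card) Pᶜ hPc]
  apply Finset.card_bij' (fun f _ => fun x => if x ∈ P then x else f x)
    (fun g _ => fun x => if x ∈ P then pt x else g x)
  · -- forward into InvOn Pᶜ
    intro f hf
    simp only [Aset, mem_filter, mem_univ, true_and] at hf
    obtain ⟨hlcd, hsh⟩ := hf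
    have hfP : ∀ x, x ∉ P → f x ∉ P := by
      intro x hx hfx
      apply hx
      have : f (f x) = pt (f x) := hfpt f hlcd hsh _ hfx
      rw [(hlcd x).1] at this
      rw [this]
      exact (hptP _ hfx).1
    simp only [InvOn, mem_filter, mem_univ, true_and]
    constructor
    · intro x hx
      rw [Finset.mem_compl] at hx
      rw [if_neg hx]
      refine ⟨Finset.mem_compl.2 (hfP x hx), ?_, (hlcd x).2⟩
      rw [if_neg (hfP x hx), (hlcd x).1]
    · intro x hx
      rw [Finset.mem_compl, not_not] at hx
      rw [if_pos hx]
  · -- backward into Aset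
    intro g hg
    simp only [InvOn, mem_filter, mem_univ, true_and] at hg
    obtain ⟨h1, h2⟩ := hg
    have hgP : ∀ x, x ∉ P → g x ∉ P := by
      intro x hx
      have := (h1 x (Finset.mem_compl.2 hx)).1
      exact fun hc => (Finset.mem_compl.1 this) hc
    simp only [Aset, mem_filter, mem_univ, true_and]
    constructor
    · intro x
      dsimp only
      by_cases hx : x ∈ P
      · rw [if_pos hx]
        obtain ⟨hp1, hp2, hp3⟩ := hptP x hx
        rw [if_pos hp1]
        exact ⟨hp2, hp3⟩
      · rw [if_neg hx, if_neg (hgP x hx)]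
        refine ⟨(h1 x (Finset.mem_compl.2 hx)).2.1, (h1 x (Finset.mem_compl.2 hx)).2.2⟩
    · intro t ht
      have h1t := (hSlt t ht).1
      have h2t := (hSlt t ht).2
      refine ⟨h1t, h2t, ?_⟩
      have hmemP : (⟨t-1, by omega⟩ : Fin (2*n)) ∈ P := by
        apply (hPmem _).2
        left
        simpa [Nat.sub_add_cancel h1t] using ht
      dsimp only
      rw [if_pos hmemP]
      apply Fin.ext
      rw [hpt1 _ (by simpa [Nat.sub_add_cancel h1t] using ht)]
      simp [Nat.sub_add_cancel h1t]
  · -- left inverse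
    intro f hf
    simp only [Aset, mem_filter, mem_univ, true_and] at hf
    obtain ⟨hlcd, hsh⟩ := hf
    funext x
    dsimp only
    by_cases hx : x ∈ P
    · rw [if_pos hx]
      exact (hfpt f hlcd hsh x hx).symm
    · rw [if_neg hx, if_neg hx]
  · -- right inverse
    intro g hg
    simp only [InvOn, mem_filter, mem_univ, true_and] at hg
    obtain ⟨h1, h2⟩ := hg
    funext x
    dsimp only
    by_cases hx : x ∈ P
    · rw [if_pos hx]
      exact (h2 x (by simpa using hx)).symm
    · rw [if_neg hx, if_neg hx]


open scoped Classical

noncomputable def Tset (n : ℕ) (f : Fin (2*n) → Fin (2*n)) : Finset ℕ :=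
  (Finset.Icc 1 (2*n-1)).filter (fun i => IsShort n f i)

lemma mem_Tset {n : ℕ} {f : Fin (2*n) → Fin (2*n)} {i : ℕ} :
    i ∈ Tset n f ↔ IsShort n f i := by
  simp only [Tset, Finset.mem_filter, Finset.mem_Icc]
  constructor
  · tauto
  · intro h
    have := short_bounds h
    exact ⟨by omega, h⟩

noncomputable def LCDf (n : ℕ) : Finset (Fin (2*n) → Fin (2*n)) :=
  univ.filter (fun f => IsLCD n f)

noncomputable def bubSet (n : ℕ) (f : Fin (2*n) → Fin (2*n)) : Finset (ℕ × ℕ) :=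
  (Finset.Icc 1 (2*n) ×ˢ Finset.Icc 1 (2*n)).filter (fun ab => IsBubble n f ab.1 ab.2)

noncomputable def leftSet (n : ℕ) (f : Fin (2*n) → Fin (2*n)) : Finset ℕ :=
  (Finset.Icc 1 (2*n)).filter (fun a => (a = 1 ∨ IsShort n f (a-2)) ∧ ¬ IsShort n f a)

lemma bubble_unique {n : ℕ} {f : Fin (2*n) → Fin (2*n)} (hf : IsLCD n f) {a b1 b2 : ℕ}
    (h1 : IsBubble n f a b1) (h2 : IsBubble n f a b2) (hlt : b1 < b2) : False := by
  obtain ⟨ha1, hab1, hb1, hns1, hl1, hr1⟩ := h1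
  obtain ⟨ha2, hab2, hb2, hns2, hl2, hr2⟩ := h2
  rcases hr1 with rfl | hs
  · omega
  · have hlt1 := (short_bounds hs).2
    by_cases hcase : b2 = b1 + 1
    · rcases hr2 with h2n | hs2
      · omega
      · rw [hcase] at hs2
        exact short_not_succ hf hs hs2
    · exact hns2 (b1+1) (by omega) (by omega) hs

lemma bub_card {n : ℕ} (hn : 1 ≤ n) {f : Fin (2*n) → Fin (2*n)} (hf : IsLCD n f) :
    (bubSet n f).card = (leftSet n f).card := by
  apply Finset.card_bij (fun ab _ => ab.1)
  · rintro ⟨a, b⟩ hab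
    simp only [bubSet, Finset.mem_filter, Finset.mem_product, Finset.mem_Icc] at hab
    obtain ⟨hmem, hbub⟩ := hab
    obtain ⟨ha1, hab', hb2n, hns, hl, hr⟩ := hbub
    simp only [leftSet, Finset.mem_filter, Finset.mem_Icc]
    refine ⟨⟨ha1, by omega⟩, hl, ?_⟩
    intro hsa
    by_cases hb : a + 1 ≤ b
    · exact hns a le_rfl hb hsa
    · have hba : b = a := by omega
      rcases hr with h2n | hs
      · have := (short_bounds hsa).2
        omega
      · rw [hba] at hs
        exact short_not_succ hf hsa hs
  · rintro ⟨a, b⟩ hab ⟨a', b'⟩ hab' (he : a = a')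
    simp only [bubSet, Finset.mem_filter] at hab hab'
    subst he
    rcases lt_trichotomy b b' with h | h | h
    · exact absurd (bubble_unique hf hab.2 hab'.2 h) (fun x => x)
    · rw [h]
    · exact absurd (bubble_unique hf hab'.2 hab.2 h) (fun x => x)
  · intro a ha
    simp only [leftSet, Finset.mem_filter, Finset.mem_Icc] at ha
    obtain ⟨⟨ha1, ha2n⟩, hl, hns⟩ := ha
    set U := (Tset n f).filter (fun t => a ≤ t) with hU
    have hUmem : ∀ x, x ∈ U ↔ (IsShort n f x ∧ a ≤ x) := by
      intro x
      rw [hU, Finset.mem_filter, mem_Tset]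
    by_cases hUne : U.Nonempty
    · set m := U.min' hUne with hm
      have hmU := (hUmem m).1 (U.min'_mem hUne)
      have hmS : IsShort n f m := hmU.1
      have hmb := short_bounds hmS
      have ham : a ≠ m := fun h => hns (h ▸ hmS)
      have haltm : a < m := by omega
      refine ⟨(a, m-1), ?_, rfl⟩
      simp only [bubSet, Finset.mem_filter, Finset.mem_product, Finset.mem_Icc]
      refine ⟨⟨⟨ha1, ha2n⟩, by omega, by omega⟩, ha1, by omega, by omega, ?_, hl, ?_⟩
      · intro i hai hib hsi
        have hiU : i ∈ U := (hUmem i).2 ⟨hsi, hai⟩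
        have hle : m ≤ i := U.min'_le i hiU
        omega
      · right
        rw [show m - 1 + 1 = m by omega]
        exact hmS
    · refine ⟨(a, 2*n), ?_, rfl⟩
      simp only [bubSet, Finset.mem_filter, Finset.mem_product, Finset.mem_Icc]
      refine ⟨⟨⟨ha1, ha2n⟩, by omega, le_rfl⟩, ha1, ha2n, le_rfl, ?_, hl, Or.inl rfl⟩
      intro i hai hib hsi
      exact hUne ⟨i, (hUmem i).2 ⟨hsi, hai⟩⟩

lemma leftSet_card {n : ℕ} (hn : 1 ≤ n) (f : Fin (2*n) → Fin (2*n)) :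
    (leftSet n f).card = (if IsShort n f 1 then 0 else 1)
      + ((Finset.Icc 1 (2*n-2)).filter (fun t => IsShort n f t ∧ ¬ IsShort n f (t+2))).card := by
  have hset : leftSet n f = (if IsShort n f 1 then (∅ : Finset ℕ) else {1})
      ∪ ((Finset.Icc 1 (2*n-2)).filter (fun t => IsShort n f t ∧ ¬ IsShort n f (t+2))).image (· + 2) := by
    ext a
    simp only [leftSet, Finset.mem_filter, Finset.mem_Icc, Finset.mem_union, Finset.mem_image]
    constructor
    · rintro ⟨⟨ha1, ha2n⟩, hl | hs2, hns⟩
      · subst hl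
        left
        rw [if_neg hns]
        exact Finset.mem_singleton_self 1
      · have hb := short_bounds hs2
        right
        exact ⟨a - 2, ⟨⟨by omega, by omega⟩, hs2, by rw [show a-2+2 = a by omega]; exact hns⟩,
          by omega⟩
    · rintro (h1 | ⟨t, ⟨⟨ht1, ht2⟩, hts, htns⟩, rfl⟩)
      · have : ¬ IsShort n f 1 ∧ a = 1 := by
          by_cases hc : IsShort n f 1
          · rw [if_pos hc] at h1; exact absurd h1 (Finset.notMem_empty a)
          · rw [if_neg hc] at h1; exact ⟨hc, Finset.mem_singleton.1 h1⟩
        obtain ⟨hc, rfl⟩ := this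
        exact ⟨⟨le_rfl, by omega⟩, Or.inl rfl, hc⟩
      · refine ⟨⟨by omega, by omega⟩, Or.inr ?_, htns⟩
        rw [show t+2-2 = t by omega]
        exact hts
  rw [hset, Finset.card_union_of_disjoint, Finset.card_image_of_injective _ (add_left_injective 2)]
  · congr 1
    by_cases hc : IsShort n f 1
    · rw [if_pos hc, if_pos hc]; rfl
    · rw [if_neg hc, if_neg hc]; rfl
  · rw [Finset.disjoint_left]
    intro x hx hx'
    simp only [Finset.mem_image] at hx'
    obtain ⟨t, -, rfl⟩ := hx'
    by_cases hc : IsShort n f 1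
    · rw [if_pos hc] at hx; exact Finset.notMem_empty _ hx
    · rw [if_neg hc] at hx
      have := Finset.mem_singleton.1 hx
      omega

lemma card_LCDf (n : ℕ) : (LCDf n).card = doubleFact n := by
  have h := (card_Aset n ∅ (by simp) (by simp)).2
  simp only [Finset.card_empty, Nat.sub_zero] at h
  rw [← h]
  congr 1
  ext f
  simp [LCDf, Aset]

lemma card_short_one {n : ℕ} (t : ℕ) (ht1 : 1 ≤ t) (ht2 : t ≤ 2*n-1) :
    ((LCDf n).filter (fun f => IsShort n f t)).card = doubleFact (n-1) := by
  have h := card_Aset n {t} (by simp [Finset.mem_Icc]; omega) (by intro i hi; simp at hi ⊢; omega)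
  simp only [Finset.card_singleton] at h
  rw [← h.2]
  congr 1
  ext f
  simp [LCDf, Aset, and_comm]

lemma card_short_two {n : ℕ} (t : ℕ) (ht1 : 1 ≤ t) (ht2 : t ≤ 2*n-3) :
    ((LCDf n).filter (fun f => IsShort n f t ∧ IsShort n f (t+2))).card = doubleFact (n-2) := by
  have hcard : ({t, t+2} : Finset ℕ).card = 2 := by
    rw [Finset.card_insert_of_notMem (by simp), Finset.card_singleton]
  have h := card_Aset n {t, t+2} ?_ ?_
  · rw [hcard] at h
    rw [← h.2]
    congr 1
    ext f
    simp only [LCDf, Aset, Finset.mem_filter, mem_univ, true_and, Finset.mem_insert,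
      Finset.mem_singleton]
    constructor
    · rintro ⟨hlcd, h1, h2⟩
      exact ⟨hlcd, by rintro i (rfl | rfl) <;> assumption⟩
    · rintro ⟨hlcd, hall⟩
      exact ⟨hlcd, hall t (Or.inl rfl), hall (t+2) (Or.inr rfl)⟩
  · intro i hi
    simp only [Finset.mem_insert, Finset.mem_singleton] at hi
    simp only [Finset.mem_Icc]
    rcases hi with rfl | rfl <;> omega
  · intro i hi
    simp only [Finset.mem_insert, Finset.mem_singleton] at hi ⊢
    rcases hi with rfl | rfl <;> omega

lemma card_short_top {n : ℕ} (hn : 2 ≤ n) :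
    ((LCDf n).filter (fun f => IsShort n f (2*n-2) ∧ IsShort n f (2*n-2+2))).card = 0 := by
  rw [Finset.card_eq_zero, Finset.eq_empty_iff_forall_notMem]
  intro f hf
  simp only [Finset.mem_filter] at hf
  have := (short_bounds hf.2.2).2
  omega


lemma sumA (n : ℕ) (hn : 1 ≤ n) :
    (∑ f ∈ LCDf n, (if IsShort n f 1 then 0 else 1)) + doubleFact (n-1) = doubleFact n := by
  have h1 : (∑ f ∈ LCDf n, (if IsShort n f 1 then 0 else 1))
      = ((LCDf n).filter (fun f => ¬ IsShort n f 1)).card := by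
    rw [Finset.card_filter]
    apply Finset.sum_congr rfl
    intro f _
    by_cases hc : IsShort n f 1
    · rw [if_pos hc, if_neg (not_not_intro hc)]
    · rw [if_neg hc, if_pos hc]
  have h2 : ((LCDf n).filter (fun f => IsShort n f 1)).card
      + ((LCDf n).filter (fun f => ¬ IsShort n f 1)).card = (LCDf n).card := by
    rw [Finset.card_filter, Finset.card_filter, ← Finset.sum_add_distrib,
      Finset.card_eq_sum_ones]
    apply Finset.sum_congr rfl
    intro f _
    by_cases hc : IsShort n f 1 <;> simp [hc]
  have h3 := card_short_one (n := n) 1 le_rfl (by omega)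
  have h4 := card_LCDf n
  omega

lemma sumB (n : ℕ) (hn : 2 ≤ n) :
    (∑ f ∈ LCDf n,
      ((Finset.Icc 1 (2*n-2)).filter (fun t => IsShort n f t ∧ ¬ IsShort n f (t+2))).card)
      + (2*n-3) * doubleFact (n-2) = (2*n-2) * doubleFact (n-1) := by
  have hswap : (∑ f ∈ LCDf n,
      ((Finset.Icc 1 (2*n-2)).filter (fun t => IsShort n f t ∧ ¬ IsShort n f (t+2))).card)
      = ∑ t ∈ Finset.Icc 1 (2*n-2),
        ((LCDf n).filter (fun f => IsShort n f t ∧ ¬ IsShort n f (t+2))).card := by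
    simp only [Finset.card_filter]
    rw [Finset.sum_comm]
  have hsplit : ∀ t ∈ Finset.Icc 1 (2*n-2),
      ((LCDf n).filter (fun f => IsShort n f t ∧ ¬ IsShort n f (t+2))).card
      + ((LCDf n).filter (fun f => IsShort n f t ∧ IsShort n f (t+2))).card
      = doubleFact (n-1) := by
    intro t ht
    rw [Finset.mem_Icc] at ht
    rw [← card_short_one t ht.1 (by omega)]
    rw [Finset.card_filter, Finset.card_filter, Finset.card_filter, ← Finset.sum_add_distrib]
    apply Finset.sum_congr rfl
    intro f _
    by_cases ha : IsShort n f t <;> by_cases hb : IsShort n f (t+2) <;> simp [ha, hb]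
  have hc2 : (∑ t ∈ Finset.Icc 1 (2*n-2),
      ((LCDf n).filter (fun f => IsShort n f t ∧ IsShort n f (t+2))).card)
      = (2*n-3) * doubleFact (n-2) := by
    have he : ∑ t ∈ Finset.Icc 1 (2*n-2),
        ((LCDf n).filter (fun f => IsShort n f t ∧ IsShort n f (t+2))).card
        = ∑ t ∈ Finset.Icc 1 ((2*n-3)+1),
        ((LCDf n).filter (fun f => IsShort n f t ∧ IsShort n f (t+2))).card := by
      rw [show (2*n-3)+1 = 2*n-2 by omega]
    rw [he, Finset.sum_Icc_succ_top (by omega)]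
    rw [show (2*n-3)+1 = 2*n-2 by omega]
    rw [card_short_top hn]
    have hcongr : ∀ t ∈ Finset.Icc 1 (2*n-3),
        ((LCDf n).filter (fun f => IsShort n f t ∧ IsShort n f (t+2))).card
        = doubleFact (n-2) := by
      intro t ht
      rw [Finset.mem_Icc] at ht
      exact card_short_two t ht.1 ht.2
    rw [Finset.sum_congr rfl hcongr, Finset.sum_const, smul_eq_mul, Nat.card_Icc,
      show 2*n-3+1-1 = 2*n-3 by omega, Nat.add_zero]
  have hsum : (∑ t ∈ Finset.Icc 1 (2*n-2),
      ((LCDf n).filter (fun f => IsShort n f t ∧ ¬ IsShort n f (t+2))).card)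
      + (∑ t ∈ Finset.Icc 1 (2*n-2),
      ((LCDf n).filter (fun f => IsShort n f t ∧ IsShort n f (t+2))).card)
      = (2*n-2) * doubleFact (n-1) := by
    rw [← Finset.sum_add_distrib, Finset.sum_congr rfl hsplit, Finset.sum_const, smul_eq_mul,
      Nat.card_Icc, show 2*n-2+1-1 = 2*n-2 by omega]
  omega

lemma totalBub (n : ℕ) (hn : 2 ≤ n) :
    (∑ f ∈ LCDf n, (bubSet n f).card) + doubleFact (n-1) + (2*n-3) * doubleFact (n-2)
      = doubleFact n + (2*n-2) * doubleFact (n-1) := by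
  have h1 : ∀ f ∈ LCDf n, (bubSet n f).card = (if IsShort n f 1 then 0 else 1)
      + ((Finset.Icc 1 (2*n-2)).filter (fun t => IsShort n f t ∧ ¬ IsShort n f (t+2))).card := by
    intro f hf
    have hlcd : IsLCD n f := (Finset.mem_filter.1 hf).2
    rw [bub_card (by omega) hlcd, leftSet_card (by omega) f]
  rw [Finset.sum_congr rfl h1, Finset.sum_add_distrib]
  have hA := sumA n (by omega)
  have hB := sumB n hn
  omega

lemma B_top_sub_one (n : ℕ) (hn : 1 ≤ n) : B n (2*n-1) = 0 := by
  rw [B, Finset.card_eq_zero, Finset.eq_empty_iff_forall_notMem]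
  rintro x hx
  simp only [Finset.mem_filter] at hx
  obtain ⟨-, hlcd, hbub, hsize⟩ := hx
  obtain ⟨ha1, hab, hb2n, hns, hl, hr⟩ := hbub
  rcases hr with hb | hs
  · rcases hl with ha | hs2
    · omega
    · have := short_bounds hs2
      omega
  · have := short_bounds hs
    omega

lemma B_top (n : ℕ) (hn : 1 ≤ n) : B n (2*n) = d n 0 := by
  rw [B, d]
  apply Finset.card_bij' (fun x _ => x.1) (fun f _ => (f, 1, 2*n))
  case hi =>
    rintro ⟨f, a, b⟩ hx
    simp only [Finset.mem_filter, Finset.mem_product] at hx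
    obtain ⟨-, hlcd, hbub, hsize⟩ := hx
    obtain ⟨ha1, hab, hb2n, hns, -, -⟩ := hbub
    simp only [Finset.mem_filter, mem_univ, true_and]
    refine ⟨hlcd, ?_⟩
    rw [Finset.card_eq_zero, Finset.eq_empty_iff_forall_notMem]
    intro i hi
    simp only [Finset.mem_filter, Finset.mem_Icc] at hi
    exact hns i (by omega) (by omega) hi.2
  case hj =>
    intro f hf
    simp only [Finset.mem_filter, mem_univ, true_and] at hf
    obtain ⟨hlcd, hcard⟩ := hf
    rw [Finset.card_eq_zero, Finset.eq_empty_iff_forall_notMem] at hcard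
    have hbub : IsBubble n f 1 (2*n) := by
      refine ⟨le_rfl, by omega, le_rfl, ?_, Or.inl rfl, Or.inl rfl⟩
      intro i hi1 hi2 hs
      have hb := short_bounds hs
      exact hcard i (by simp only [Finset.mem_filter, Finset.mem_Icc]; exact ⟨⟨hb.1, by omega⟩, hs⟩)
    refine Finset.mem_filter.2 ⟨?_, hlcd, hbub, show 2*n - 1 + 1 = 2*n by omega⟩
    simp only [Finset.mem_product, Finset.mem_Icc, mem_univ, true_and]
    omega
  case left_inv =>
    rintro ⟨f, a, b⟩ hx
    simp only [Finset.mem_filter, Finset.mem_product] at hx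
    obtain ⟨hmem, hlcd, hbub, hsize⟩ := hx
    obtain ⟨ha1, hab, hb2n, -, -, -⟩ := hbub
    have hae : a = 1 ∧ b = 2*n := by omega
    simp only [Prod.mk.injEq]
    exact ⟨trivial, hae.1.symm, hae.2.symm⟩
  case right_inv =>
    intro f hf
    rfl

lemma sum_B_split (n : ℕ) (hn : 2 ≤ n) :
    ∑ p ∈ Finset.Icc 1 (2*n), B n p
      = (∑ p ∈ Finset.Icc 1 (2*n-2), B n p) + B n (2*n-1) + B n (2*n) := by
  have h : ∑ p ∈ Finset.Icc 1 (2*n), B n p = ∑ p ∈ Finset.Icc 1 ((2*n-2)+1+1), B n p := by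
    rw [show (2*n-2)+1+1 = 2*n by omega]
  rw [h, Finset.sum_Icc_succ_top (by omega), Finset.sum_Icc_succ_top (by omega),
    show (2*n-2)+1+1 = 2*n by omega, show (2*n-2)+1 = 2*n-1 by omega]

lemma key_identity (n : ℕ) (hn : 2 ≤ n) :
    (∑ p ∈ Finset.Icc 1 (2*n-2), B n p) + d n 0 + doubleFact (n-1)
      + (2*n-3) * doubleFact (n-2)
      = doubleFact n + (2*n-2) * doubleFact (n-1) := by
  classical
  set Tot := ((univ : Finset (Fin (2*n) → Fin (2*n))) ×ˢ (Finset.Icc 1 (2*n) ×ˢ Finset.Icc 1 (2*n))).filter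
    (fun x : (Fin (2*n) → Fin (2*n)) × ℕ × ℕ => IsLCD n x.1 ∧ IsBubble n x.1 x.2.1 x.2.2)
    with hTot
  have hmemTot : ∀ x, x ∈ Tot ↔ (x.2.1 ∈ Finset.Icc 1 (2*n) ∧ x.2.2 ∈ Finset.Icc 1 (2*n)
      ∧ IsLCD n x.1 ∧ IsBubble n x.1 x.2.1 x.2.2) := by
    intro x
    rw [hTot]
    simp only [Finset.mem_filter, Finset.mem_product, mem_univ, true_and]
    tauto
  have hfib1 : Tot.card = ∑ p ∈ Finset.Icc 1 (2*n), B n p := by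
    have hmaps : ∀ x ∈ Tot, x.2.2 - x.2.1 + 1 ∈ Finset.Icc 1 (2*n) := by
      intro x hx
      rw [hmemTot] at hx
      obtain ⟨hx1, hx2, -, hbub⟩ := hx
      obtain ⟨ha1, hab, hb2n, -, -, -⟩ := hbub
      rw [Finset.mem_Icc] at hx1 hx2 ⊢
      omega
    rw [Finset.card_eq_sum_card_fiberwise hmaps]
    apply Finset.sum_congr rfl
    intro p hp
    rw [B]
    congr 1
    ext x
    rw [Finset.mem_filter, hmemTot]
    simp only [Finset.mem_filter, Finset.mem_product, mem_univ, true_and]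
    tauto
  have hfib2 : Tot.card = ∑ f ∈ LCDf n, (bubSet n f).card := by
    have hmaps : ∀ x ∈ Tot, x.1 ∈ LCDf n := by
      intro x hx
      rw [hmemTot] at hx
      rw [LCDf, Finset.mem_filter]
      exact ⟨mem_univ _, hx.2.2.1⟩
    rw [Finset.card_eq_sum_card_fiberwise hmaps]
    apply Finset.sum_congr rfl
    intro f hf
    apply Finset.card_bij' (fun x _ => x.2) (fun ab _ => (f, ab))
    case hi =>
      intro x hx
      rw [Finset.mem_filter, hmemTot] at hx
      obtain ⟨⟨h1, h2, h3, h4⟩, h5⟩ := hx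
      simp only [bubSet, Finset.mem_filter, Finset.mem_product]
      rw [← h5]
      exact ⟨⟨h1, h2⟩, h4⟩
    case hj =>
      intro ab hab
      simp only [bubSet, Finset.mem_filter, Finset.mem_product] at hab
      rw [Finset.mem_filter, hmemTot]
      exact ⟨⟨hab.1.1, hab.1.2, (Finset.mem_filter.1 hf).2, hab.2⟩, rfl⟩
    case left_inv =>
      intro x hx
      rw [Finset.mem_filter] at hx
      rw [Prod.ext_iff]
      exact ⟨hx.2.symm, rfl⟩
    case right_inv =>
      intro ab hab
      rfl
  have hTB := totalBub n hn
  have hsplit := sum_B_split n hn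
  have hB1 := B_top_sub_one n (by omega)
  have hB2 := B_top n (by omega)
  omega


noncomputable def mc (n j : ℕ) : ℕ :=
  (((Finset.Icc 1 (2*n-1)).powerset).filter (fun S => S.card = j ∧ ∀ i ∈ S, i + 1 ∉ S)).card

lemma Aset_eq_filter (n : ℕ) (S : Finset ℕ) (hS : S ⊆ Finset.Icc 1 (2*n-1)) :
    Aset n S = (LCDf n).filter (fun f => S ⊆ Tset n f) := by
  ext f
  simp only [Aset, LCDf, Finset.mem_filter, mem_univ, true_and]
  constructor
  · rintro ⟨hlcd, hsh⟩
    exact ⟨hlcd, fun t ht => mem_Tset.2 (hsh t ht)⟩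
  · rintro ⟨hlcd, hsub⟩
    exact ⟨hlcd, fun t ht => mem_Tset.1 (hsub ht)⟩

lemma Tset_nocons {n : ℕ} {f : Fin (2*n) → Fin (2*n)} (hf : IsLCD n f) :
    ∀ i ∈ Tset n f, i + 1 ∉ Tset n f := by
  intro i hi hi1
  exact short_not_succ hf (mem_Tset.1 hi) (mem_Tset.1 hi1)

lemma mc_DF_eq_sum_choose (n j : ℕ) :
    mc n j * doubleFact (n - j) = ∑ f ∈ LCDf n, (Tset n f).card.choose j := by
  classical
  set M := ((Finset.Icc 1 (2*n-1)).powerset).filter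
    (fun S => S.card = j ∧ ∀ i ∈ S, i + 1 ∉ S) with hM
  have hMmem : ∀ S, S ∈ M ↔ (S ⊆ Finset.Icc 1 (2*n-1) ∧ S.card = j ∧ ∀ i ∈ S, i + 1 ∉ S) := by
    intro S
    rw [hM, Finset.mem_filter, Finset.mem_powerset]
  have h1 : mc n j * doubleFact (n - j) = ∑ S ∈ M, (Aset n S).card := by
    have : ∀ S ∈ M, (Aset n S).card = doubleFact (n - j) := by
      intro S hS
      rw [hMmem] at hS
      have := (card_Aset n S hS.1 hS.2.2).2
      rw [hS.2.1] at this
      exact this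
    rw [Finset.sum_congr rfl this, Finset.sum_const, smul_eq_mul, mc, ← hM]
  rw [h1]
  have h2 : ∀ S ∈ M, (Aset n S).card = ∑ f ∈ LCDf n, if S ⊆ Tset n f then 1 else 0 := by
    intro S hS
    rw [Aset_eq_filter n S ((hMmem S).1 hS).1, Finset.card_filter]
  rw [Finset.sum_congr rfl h2, Finset.sum_comm]
  apply Finset.sum_congr rfl
  intro f hf
  have hlcd : IsLCD n f := (Finset.mem_filter.1 hf).2
  rw [← Finset.card_filter]
  rw [← Finset.card_powersetCard]
  congr 1
  ext S
  rw [Finset.mem_filter, hMmem, Finset.mem_powersetCard]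
  constructor
  · rintro ⟨⟨hsub, hcard, hno⟩, hsubT⟩
    exact ⟨hsubT, hcard⟩
  · rintro ⟨hsubT, hcard⟩
    have hsubI : S ⊆ Finset.Icc 1 (2*n-1) := hsubT.trans (Finset.filter_subset _ _)
    refine ⟨⟨hsubI, hcard, ?_⟩, hsubT⟩
    intro i hi hi1
    exact Tset_nocons hlcd i (hsubT hi) (hsubT hi1)

noncomputable def realFk (k n : ℕ) : ℝ :=
  ∑ j ∈ Finset.range (k+1), (-1:ℝ)^j * ((mc n j * doubleFact (n-j) : ℕ) : ℝ)

lemma alt_sum_choose (t k : ℕ) (ht : 1 ≤ t) :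
    ∑ j ∈ Finset.range (k+1), (-1:ℝ)^j * (t.choose j : ℝ)
      = (-1)^k * (((t-1).choose k : ℕ) : ℝ) := by
  induction k with
  | zero => simp
  | succ k ih =>
    rw [Finset.sum_range_succ, ih]
    obtain ⟨t', rfl⟩ : ∃ t', t = t'+1 := ⟨t-1, by omega⟩
    simp only [Nat.add_sub_cancel]
    rw [Nat.choose_succ_succ']
    push_cast
    ring

lemma alt_sum_choose_zero (k : ℕ) :
    ∑ j ∈ Finset.range (k+1), (-1:ℝ)^j * (((0:ℕ).choose j : ℕ) : ℝ) = 1 := by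
  induction k with
  | zero => simp
  | succ k ih =>
    rw [Finset.sum_range_succ, ih, Nat.choose_zero_succ]
    simp

lemma bonferroni (k n : ℕ) :
    ∃ c : ℝ, 0 ≤ c ∧ realFk k n = (d n 0 : ℝ) + (-1)^k * c := by
  classical
  have hFk : realFk k n
      = ∑ f ∈ LCDf n, ∑ j ∈ Finset.range (k+1), (-1:ℝ)^j * ((Tset n f).card.choose j : ℝ) := by
    rw [realFk]
    have : ∀ j ∈ Finset.range (k+1), (-1:ℝ)^j * ((mc n j * doubleFact (n-j) : ℕ) : ℝ)
        = ∑ f ∈ LCDf n, (-1:ℝ)^j * ((Tset n f).card.choose j : ℝ) := by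
      intro j _
      rw [← Finset.mul_sum]
      congr 1
      rw [mc_DF_eq_sum_choose]
      push_cast
      rfl
    rw [Finset.sum_congr rfl this, Finset.sum_comm]
  refine ⟨∑ f ∈ (LCDf n).filter (fun f => ¬ (Tset n f).card = 0),
    ((((Tset n f).card - 1).choose k : ℕ) : ℝ), ?_, ?_⟩
  · apply Finset.sum_nonneg
    intro f _
    positivity
  · rw [hFk, ← Finset.sum_filter_add_sum_filter_not (LCDf n) (fun f => (Tset n f).card = 0)]
    have hA : ∀ f ∈ (LCDf n).filter (fun f => (Tset n f).card = 0),
        ∑ j ∈ Finset.range (k+1), (-1:ℝ)^j * ((Tset n f).card.choose j : ℝ) = 1 := by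
      intro f hf
      have h0 : (Tset n f).card = 0 := (Finset.mem_filter.1 hf).2
      rw [h0]
      exact_mod_cast alt_sum_choose_zero k
    have hB : ∀ f ∈ (LCDf n).filter (fun f => ¬ (Tset n f).card = 0),
        ∑ j ∈ Finset.range (k+1), (-1:ℝ)^j * ((Tset n f).card.choose j : ℝ)
          = (-1:ℝ)^k * ((((Tset n f).card - 1).choose k : ℕ) : ℝ) := by
      intro f hf
      have h0 : ¬ (Tset n f).card = 0 := (Finset.mem_filter.1 hf).2
      exact alt_sum_choose _ k (by omega)
    have hd : (Finset.filter (fun f => (Tset n f).card = 0) (LCDf n)).card = d n 0 := by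
      rw [d]
      congr 1
      ext f
      simp only [LCDf, Finset.mem_filter, mem_univ, true_and]
      exact Iff.rfl
    rw [Finset.sum_congr rfl hA, Finset.sum_congr rfl hB, Finset.sum_const, nsmul_eq_mul, mul_one,
      ← Finset.mul_sum, hd]


lemma mc_zero (n : ℕ) : mc n 0 = 1 := by
  rw [mc]
  have : (((Finset.Icc 1 (2*n-1)).powerset).filter
      (fun S => S.card = 0 ∧ ∀ i ∈ S, i + 1 ∉ S)) = {∅} := by
    ext S
    simp only [Finset.mem_filter, Finset.mem_powerset, Finset.mem_singleton, Finset.card_eq_zero]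
    constructor
    · rintro ⟨-, h, -⟩; exact h
    · rintro rfl
      simp
  rw [this, Finset.card_singleton]

lemma mc_one (n : ℕ) : mc n 1 = 2*n-1 := by
  rw [mc]
  have : (((Finset.Icc 1 (2*n-1)).powerset).filter
      (fun S => S.card = 1 ∧ ∀ i ∈ S, i + 1 ∉ S))
      = ((Finset.Icc 1 (2*n-1)).powerset).filter (fun S => S.card = 1) := by
    ext S
    simp only [Finset.mem_filter, Finset.mem_powerset]
    constructor
    · rintro ⟨h1, h2, -⟩; exact ⟨h1, h2⟩
    · rintro ⟨h1, h2⟩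
      refine ⟨h1, h2, ?_⟩
      obtain ⟨x, rfl⟩ := Finset.card_eq_one.1 h2
      intro i hi hi1
      rw [Finset.mem_singleton] at hi hi1
      omega
  rw [this, ← Finset.powersetCard_eq_filter, Finset.card_powersetCard, Nat.card_Icc,
    Nat.choose_one_right]
  omega

lemma mc_le (n j : ℕ) : mc n j ≤ (2*n-1).choose j := by
  have h : ((Finset.Icc 1 (2*n-1)).powersetCard j).card = (2*n-1).choose j := by
    rw [Finset.card_powersetCard, Nat.card_Icc, show 2*n-1+1-1 = 2*n-1 by omega]
  rw [mc, ← h]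
  apply Finset.card_le_card
  intro S hS
  rw [Finset.mem_filter] at hS
  rw [Finset.mem_powersetCard]
  exact ⟨Finset.mem_powerset.1 hS.1, hS.2.1⟩

lemma mc_lower (n j : ℕ) :
    (2*n-1).choose (j+2) ≤ mc n (j+2) + (2*n-2) * ((2*n-3).choose j) := by
  classical
  set I := Finset.Icc 1 (2*n-1) with hI
  have hIcard : I.card = 2*n-1 := by rw [hI, Nat.card_Icc]; omega
  set W := I.powerset.filter (fun S => S.card = j+2) with hW
  have hWcard : W.card = (2*n-1).choose (j+2) := by
    rw [hW, ← Finset.powersetCard_eq_filter, Finset.card_powersetCard, hIcard]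
  have hsplit : (W.filter (fun S => ∀ i ∈ S, i + 1 ∉ S)).card
      + (W.filter (fun S => ¬ ∀ i ∈ S, i + 1 ∉ S)).card = W.card := by
    rw [Finset.card_filter, Finset.card_filter, ← Finset.sum_add_distrib,
      Finset.card_eq_sum_ones]
    apply Finset.sum_congr rfl
    intro S _
    by_cases hc : ∀ i ∈ S, i + 1 ∉ S
    · rw [if_pos hc, if_neg (not_not_intro hc)]
    · rw [if_neg hc, if_pos hc]
  have hmc : (W.filter (fun S => ∀ i ∈ S, i + 1 ∉ S)).card = mc n (j+2) := by
    rw [mc, hW, Finset.filter_filter]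
  have hbad : (W.filter (fun S => ¬ ∀ i ∈ S, i + 1 ∉ S)).card
      ≤ (2*n-2) * ((2*n-3).choose j) := by
    have hsub : W.filter (fun S => ¬ ∀ i ∈ S, i + 1 ∉ S)
        ⊆ (Finset.Icc 1 (2*n-2)).biUnion
          (fun i => W.filter (fun S => i ∈ S ∧ i + 1 ∈ S)) := by
      intro S hS
      rw [Finset.mem_filter] at hS
      obtain ⟨hSW, hbad⟩ := hS
      push_neg at hbad
      obtain ⟨i, hiS, hi1S⟩ := hbad
      rw [Finset.mem_biUnion]
      have hSI : S ⊆ I := Finset.mem_powerset.1 (Finset.mem_filter.1 hSW).1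
      have h1 := Finset.mem_Icc.1 (hSI hiS)
      have h2 := Finset.mem_Icc.1 (hSI hi1S)
      refine ⟨i, Finset.mem_Icc.2 (by omega), Finset.mem_filter.2 ⟨hSW, hiS, hi1S⟩⟩
    calc (W.filter (fun S => ¬ ∀ i ∈ S, i + 1 ∉ S)).card
        ≤ ((Finset.Icc 1 (2*n-2)).biUnion
          (fun i => W.filter (fun S => i ∈ S ∧ i + 1 ∈ S))).card := Finset.card_le_card hsub
      _ ≤ ∑ i ∈ Finset.Icc 1 (2*n-2), (W.filter (fun S => i ∈ S ∧ i + 1 ∈ S)).card :=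
          Finset.card_biUnion_le
      _ ≤ ∑ i ∈ Finset.Icc 1 (2*n-2), (2*n-3).choose j := by
          apply Finset.sum_le_sum
          intro i hi
          rw [Finset.mem_Icc] at hi
          have hi1I : i ∈ I := by rw [hI, Finset.mem_Icc]; omega
          have hi2I : i + 1 ∈ I := by rw [hI, Finset.mem_Icc]; omega
          have htarget : (((I.erase i).erase (i+1)).powersetCard j).card = (2*n-3).choose j := by
            rw [Finset.card_powersetCard, Finset.card_erase_of_mem
              (Finset.mem_erase.2 ⟨by omega, hi2I⟩), Finset.card_erase_of_mem hi1I, hIcard,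
              show 2*n-1-1-1 = 2*n-3 by omega]
          rw [← htarget]
          apply Finset.card_le_card_of_injOn (fun S => (S.erase i).erase (i+1))
          · intro S hS
            rw [Finset.mem_coe, Finset.mem_filter] at hS
            obtain ⟨hSW, hiS, hi1S⟩ := hS
            have hSI : S ⊆ I := Finset.mem_powerset.1 (Finset.mem_filter.1 hSW).1
            have hScard : S.card = j+2 := (Finset.mem_filter.1 hSW).2
            rw [Finset.mem_coe, Finset.mem_powersetCard]
            constructor
            · intro x hx
              rw [Finset.mem_erase] at hx ⊢
              obtain ⟨hx1, hx2⟩ := hx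
              rw [Finset.mem_erase] at hx2 ⊢
              exact ⟨hx1, hx2.1, hSI hx2.2⟩
            · rw [Finset.card_erase_of_mem (Finset.mem_erase.2 ⟨by omega, hi1S⟩),
                Finset.card_erase_of_mem hiS, hScard]
              omega
          · intro S hS S' hS' he
            rw [Finset.coe_filter, Set.mem_setOf_eq] at hS hS'
            obtain ⟨hSW, hiS, hi1S⟩ := hS
            obtain ⟨hSW', hiS', hi1S'⟩ := hS'
            have key : ∀ (T : Finset ℕ), i ∈ T → i+1 ∈ T →
                T = insert i (insert (i+1) ((T.erase i).erase (i+1))) := by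
              intro T h1 h2
              ext x
              simp only [Finset.mem_insert, Finset.mem_erase]
              constructor
              · intro hx
                by_cases hxi : x = i
                · exact Or.inl hxi
                · by_cases hxi1 : x = i+1
                  · exact Or.inr (Or.inl hxi1)
                  · exact Or.inr (Or.inr ⟨hxi1, hxi, hx⟩)
              · rintro (rfl | rfl | ⟨-, -, hx⟩) <;> first | exact h1 | exact h2 | exact hx
            have he' : (S.erase i).erase (i+1) = (S'.erase i).erase (i+1) := he
            rw [key S hiS hi1S, key S' hiS' hi1S', he']
      _ = (2*n-2) * ((2*n-3).choose j) := by
          rw [Finset.sum_const, smul_eq_mul, Nat.card_Icc,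
            show 2*n-2+1-1 = 2*n-2 by omega]
  omega

lemma DF_ratio : ∀ (j n : ℕ), j ≤ n →
    doubleFact n = doubleFact (n - j) * ∏ i ∈ Finset.range j, (2*(n-i)-1) := by
  intro j
  induction j with
  | zero => intro n _; simp
  | succ j ih =>
    intro n hn
    obtain ⟨m, rfl⟩ : ∃ m, n = j+1+m := ⟨n-(j+1), by omega⟩
    rw [Finset.prod_range_succ, ih (j+1+m) (by omega)]
    rw [show j+1+m-(j+1) = m by omega, show j+1+m-j = m+1 by omega, doubleFact_succ,
      show 2*(m+1)-1 = 2*m+1 by omega]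
    ring


open Filter

lemma tendsto_const_div2n (c : ℝ) :
    Filter.Tendsto (fun n : ℕ => c/(2*(n:ℝ))) atTop (nhds 0) := by
  have h := tendsto_const_div_atTop_nhds_zero_nat (c/2)
  apply h.congr
  intro n
  rw [div_div]

lemma tendsto_factor (c : ℕ) :
    Filter.Tendsto (fun n : ℕ => ((2*n - c : ℕ) : ℝ)/(2*(n:ℝ))) atTop (nhds 1) := by
  have h := (tendsto_const_nhds (x := (1:ℝ)) (f := atTop (α := ℕ))).sub (tendsto_const_div2n c)
  rw [sub_zero] at h
  apply h.congr'
  filter_upwards [eventually_ge_atTop (c+1)] with n hn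
  have hnp : (0:ℝ) < (n:ℝ) := by exact_mod_cast (by omega : 0 < n)
  have hne : (2*(n:ℝ)) ≠ 0 := by positivity
  rw [Nat.cast_sub (by omega : c ≤ 2*n)]
  push_cast
  rw [sub_div, div_self hne]

lemma tendsto_inv_factor (c : ℕ) :
    Filter.Tendsto (fun n : ℕ => (2*(n:ℝ))/((2*n - c : ℕ) : ℝ)) atTop (nhds 1) := by
  have h := (tendsto_factor c).inv₀ one_ne_zero
  rw [inv_one] at h
  apply h.congr
  intro n
  rw [inv_div]

lemma tendsto_choose_div (c j : ℕ) :
    Filter.Tendsto (fun n : ℕ => (((2*n - c).choose j : ℕ) : ℝ)/(2*(n:ℝ))^j) atTop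
      (nhds (1/(j.factorial : ℝ))) := by
  have hprod : Filter.Tendsto (fun n : ℕ => ∏ i ∈ Finset.range j,
      (((2*n - (c+i) : ℕ) : ℝ)/(2*(n:ℝ)))) atTop (nhds 1) := by
    have h := tendsto_finset_prod (Finset.range j)
      (fun i (_ : i ∈ Finset.range j) => tendsto_factor (c+i))
    simpa using h
  have hlim := hprod.const_mul (1/(j.factorial:ℝ))
  rw [mul_one] at hlim
  apply hlim.congr'
  filter_upwards [eventually_ge_atTop (c+j+1)] with n hn
  have hdesc : (((2*n - c).choose j : ℕ) : ℝ)
      = (((2*n-c).descFactorial j : ℕ):ℝ)/(j.factorial:ℝ) := by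
    rw [Nat.choose_eq_descFactorial_div_factorial,
      Nat.cast_div (Nat.factorial_dvd_descFactorial _ _)
        (by exact_mod_cast j.factorial_ne_zero)]
  rw [hdesc, Nat.descFactorial_eq_prod_range, Nat.cast_prod]
  simp only [Nat.sub_sub]
  rw [Finset.prod_div_distrib, Finset.prod_const, Finset.card_range]
  ring

lemma tendsto_mc_div : ∀ (j : ℕ),
    Filter.Tendsto (fun n : ℕ => ((mc n j : ℕ) : ℝ)/(2*(n:ℝ))^j) atTop
      (nhds (1/(j.factorial : ℝ)))
  | 0 => by
    have h : (fun n : ℕ => ((mc n 0 : ℕ) : ℝ)/(2*(n:ℝ))^0) = fun _ => 1 := by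
      funext n
      rw [mc_zero]
      norm_num
    rw [h, Nat.factorial_zero]
    norm_num
  | 1 => by
    have h := tendsto_choose_div 1 1
    apply h.congr
    intro n
    rw [Nat.choose_one_right, mc_one]
  | (j+2) => by
    have hupper := tendsto_choose_div 1 (j+2)
    have hsecond : Filter.Tendsto (fun n : ℕ =>
        ((2*n-2:ℕ):ℝ) * (((2*n-3).choose j : ℕ):ℝ)/(2*(n:ℝ))^(j+2)) atTop (nhds 0) := by
      have h := ((tendsto_factor 2).mul (tendsto_choose_div 3 j)).mul (tendsto_const_div2n 1)
      rw [mul_zero] at h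
      apply h.congr
      intro n
      ring
    have hlower := hupper.sub hsecond
    rw [sub_zero] at hlower
    apply tendsto_of_tendsto_of_tendsto_of_le_of_le hlower hupper
    · intro n
      have hcast : (((2*n-1).choose (j+2) : ℕ) : ℝ)
          ≤ ((mc n (j+2) : ℕ) : ℝ) + ((2*n-2:ℕ):ℝ) * (((2*n-3).choose j : ℕ):ℝ) := by
        exact_mod_cast mc_lower n j
      show _ - _ ≤ _
      rw [← sub_div]
      exact div_le_div_of_nonneg_right (by linarith) (by positivity)
    · intro n
      exact div_le_div_of_nonneg_right (Nat.cast_le.mpr (mc_le n (j+2))) (by positivity)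

lemma tendsto_Q (j : ℕ) :
    Filter.Tendsto (fun n : ℕ =>
      (2*(n:ℝ))^j / ((∏ i ∈ Finset.range j, (2*(n-i)-1) : ℕ) : ℝ)) atTop (nhds 1) := by
  have hlim : Filter.Tendsto (fun n : ℕ => ∏ i ∈ Finset.range j,
      ((2*(n:ℝ)) / ((2*(n-i)-1 : ℕ):ℝ))) atTop (nhds 1) := by
    have h := tendsto_finset_prod (Finset.range j)
      (fun i (_ : i ∈ Finset.range j) => ?_ :
        ∀ i ∈ Finset.range j, Filter.Tendsto (fun n : ℕ => (2*(n:ℝ)) / ((2*(n-i)-1 : ℕ):ℝ))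
          atTop (nhds 1))
    · simpa using h
    · apply (tendsto_inv_factor (2*i+1)).congr'
      filter_upwards [eventually_ge_atTop (i+1)] with n hn
      rw [show 2*n-(2*i+1) = 2*(n-i)-1 by omega]
  apply hlim.congr
  intro n
  rw [Finset.prod_div_distrib, Finset.prod_const, Finset.card_range, Nat.cast_prod]

lemma tendsto_a (j : ℕ) :
    Filter.Tendsto (fun n : ℕ => (mc n j : ℝ) * (doubleFact (n-j) : ℝ) / (doubleFact n : ℝ))
      atTop (nhds (1/(j.factorial : ℝ))) := by
  have hlim := (tendsto_mc_div j).mul (tendsto_Q j)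
  rw [mul_one] at hlim
  apply hlim.congr'
  filter_upwards [eventually_ge_atTop (j+1)] with n hn
  have hQpos : 0 < ∏ i ∈ Finset.range j, (2*(n-i)-1) := by
    apply Finset.prod_pos
    intro i hi
    rw [Finset.mem_range] at hi
    omega
  have hQne : ((∏ i ∈ Finset.range j, (2*(n-i)-1) : ℕ) : ℝ) ≠ 0 := by
    exact_mod_cast hQpos.ne'
  have hDFne : ((doubleFact (n-j) : ℕ) : ℝ) ≠ 0 := by
    exact_mod_cast (doubleFact_pos (n-j)).ne'
  have h2ne : (2*(n:ℝ))^j ≠ 0 := by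
    have hnp : (0:ℝ) < (n:ℝ) := by exact_mod_cast (by omega : 0 < n)
    positivity
  set q := ((∏ i ∈ Finset.range j, (2*(n-i)-1) : ℕ) : ℝ) with hq
  set df := ((doubleFact (n-j) : ℕ) : ℝ) with hdf
  have hDF : (doubleFact n : ℝ) = df * q := by
    rw [hdf, hq, ← Nat.cast_mul, ← DF_ratio j n (by omega)]
  rw [hDF]
  field_simp

lemma tendsto_Fk (k : ℕ) :
    Filter.Tendsto (fun n : ℕ => realFk k n / (doubleFact n : ℝ)) atTop
      (nhds (∑ j ∈ Finset.range (k+1), (-1:ℝ)^j / (j.factorial : ℝ))) := by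
  have hlim : Filter.Tendsto (fun n : ℕ => ∑ j ∈ Finset.range (k+1),
      (-1:ℝ)^j * ((mc n j : ℝ) * (doubleFact (n-j) : ℝ) / (doubleFact n : ℝ)))
      atTop (nhds (∑ j ∈ Finset.range (k+1), (-1:ℝ)^j * (1/(j.factorial : ℝ)))) := by
    apply tendsto_finset_sum
    intro j _
    exact (tendsto_a j).const_mul ((-1:ℝ)^j)
  have heq : (∑ j ∈ Finset.range (k+1), (-1:ℝ)^j * (1/(j.factorial : ℝ)))
      = ∑ j ∈ Finset.range (k+1), (-1:ℝ)^j / (j.factorial : ℝ) := by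
    apply Finset.sum_congr rfl
    intro j _
    rw [mul_one_div]
  rw [heq] at hlim
  apply hlim.congr
  intro n
  rw [realFk, Finset.sum_div]
  apply Finset.sum_congr rfl
  intro j _
  push_cast
  ring

noncomputable def Pk (k : ℕ) : ℝ := ∑ j ∈ Finset.range (k+1), (-1:ℝ)^j / (j.factorial : ℝ)

lemma tendsto_Pk : Filter.Tendsto Pk atTop (nhds (Real.exp 1)⁻¹) := by
  have h : HasSum (fun j : ℕ => (-1:ℝ)^j / (j.factorial : ℝ)) (Real.exp (-1)) := by
    rw [Real.exp_eq_exp_ℝ]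
    exact NormedSpace.expSeries_div_hasSum_exp (-1 : ℝ)
  have h2 := h.tendsto_sum_nat
  have h3 := h2.comp (tendsto_add_atTop_nat 1)
  rw [Real.exp_neg] at h3
  exact h3.congr (fun k => rfl)

lemma even_bound (k n : ℕ) (hk : Even k) : (d n 0 : ℝ) ≤ realFk k n := by
  obtain ⟨c, hc, he⟩ := bonferroni k n
  rw [he, hk.neg_one_pow]
  linarith

lemma odd_bound (k n : ℕ) (hk : Odd k) : realFk k n ≤ (d n 0 : ℝ) := by
  obtain ⟨c, hc, he⟩ := bonferroni k n
  rw [he, hk.neg_one_pow]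
  linarith

lemma tendsto_d0 :
    Filter.Tendsto (fun n : ℕ => (d n 0 : ℝ) / (doubleFact n : ℝ)) atTop
      (nhds (Real.exp 1)⁻¹) := by
  rw [Metric.tendsto_atTop]
  intro ε hε
  obtain ⟨K, hK⟩ := Metric.tendsto_atTop.1 tendsto_Pk (ε/2) (by linarith)
  have hPke := hK (2*K) (by omega)
  have hPko := hK (2*K+1) (by omega)
  obtain ⟨N1, hN1⟩ := Metric.tendsto_atTop.1 (tendsto_Fk (2*K)) (ε/2) (by linarith)
  obtain ⟨N2, hN2⟩ := Metric.tendsto_atTop.1 (tendsto_Fk (2*K+1)) (ε/2) (by linarith)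
  refine ⟨max N1 N2, ?_⟩
  intro n hn
  have h1 := hN1 n (le_trans (le_max_left _ _) hn)
  have h2 := hN2 n (le_trans (le_max_right _ _) hn)
  have hDFpos : (0:ℝ) < (doubleFact n : ℝ) := by exact_mod_cast doubleFact_pos n
  have hup : (d n 0 : ℝ)/(doubleFact n : ℝ) ≤ realFk (2*K) n/(doubleFact n : ℝ) :=
    div_le_div_of_nonneg_right (even_bound (2*K) n (even_two_mul K)) hDFpos.le
  have hdown : realFk (2*K+1) n/(doubleFact n : ℝ) ≤ (d n 0 : ℝ)/(doubleFact n : ℝ) :=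
    div_le_div_of_nonneg_right (odd_bound (2*K+1) n (odd_two_mul_add_one K)) hDFpos.le
  rw [show (∑ j ∈ Finset.range (2*K+1), (-1:ℝ)^j / (j.factorial : ℝ)) = Pk (2*K) from rfl] at h1
  rw [show (∑ j ∈ Finset.range (2*K+1+1), (-1:ℝ)^j / (j.factorial : ℝ)) = Pk (2*K+1) from rfl] at h2
  rw [Real.dist_eq, abs_lt] at h1 h2 hPke hPko ⊢
  have hPkeL := hPke
  constructor
  · -- -ε < d/DF - L
    have : Pk (2*K+1) - ε/2 < realFk (2*K+1) n/(doubleFact n : ℝ) := by linarith [h2.1]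
    linarith [hPko.1, hPko.2, h2.1, h2.2]
  · have : realFk (2*K) n/(doubleFact n : ℝ) < Pk (2*K) + ε/2 := by linarith [h1.2]
    linarith [hPke.1, hPke.2, h1.1, h1.2]


lemma tendsto_one_div_2n1 :
    Filter.Tendsto (fun n : ℕ => (1:ℝ)/((2*n-1:ℕ):ℝ)) atTop (nhds 0) := by
  have ha : Filter.Tendsto (fun n : ℕ => ((2*n-1:ℕ):ℝ)) atTop atTop :=
    tendsto_natCast_atTop_atTop.comp
      (tendsto_atTop_mono (fun n => (by omega : n ≤ 2*n-1)) tendsto_id)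
  simpa [one_div, Pi.inv_def] using ha.inv_tendsto_atTop

lemma tendsto_ratio21 :
    Filter.Tendsto (fun n : ℕ => ((2*n-2:ℕ):ℝ)/((2*n-1:ℕ):ℝ)) atTop (nhds 1) := by
  have h := (tendsto_factor 2).mul (tendsto_inv_factor 1)
  rw [mul_one] at h
  apply h.congr'
  filter_upwards [eventually_ge_atTop 2] with n hn
  have h2n : (2*(n:ℝ)) ≠ 0 := by
    have : (0:ℝ) < n := by exact_mod_cast (by omega : 0 < n)
    positivity
  rw [div_mul_div_comm, mul_comm ((2*n-2:ℕ):ℝ) (2*(n:ℝ)), mul_div_mul_left _ _ h2n]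



/-- The number of bubbles of size at most `2n-2` is asymptotic to `(2 - e⁻¹)·(2n-1)!!`,
where `(2n-1)!! = (2n)!/(2^n·n!)`. -/
theorem truncated_bubble_count_asymptotic :
    Filter.Tendsto (fun n : ℕ =>
      ((∑ p ∈ Finset.Icc 1 (2*n-2), B n p : ℕ) : ℝ) / ((doubleFact n : ℕ) : ℝ))
      Filter.atTop (nhds (2 - (Real.exp 1)⁻¹)) := by
  have hG : Filter.Tendsto (fun n : ℕ => 1 + ((2*n-2:ℕ):ℝ)/((2*n-1:ℕ):ℝ)
      - (d n 0:ℝ)/((doubleFact n : ℕ):ℝ) - (1:ℝ)/((2*n-1:ℕ):ℝ) - (1:ℝ)/((2*n-1:ℕ):ℝ))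
      atTop (nhds (1 + 1 - (Real.exp 1)⁻¹ - 0 - 0)) :=
    (((tendsto_const_nhds.add tendsto_ratio21).sub tendsto_d0).sub
      tendsto_one_div_2n1).sub tendsto_one_div_2n1
  rw [show (1:ℝ) + 1 - (Real.exp 1)⁻¹ - 0 - 0 = 2 - (Real.exp 1)⁻¹ by ring] at hG
  apply hG.congr'
  filter_upwards [eventually_ge_atTop 2] with n hn
  obtain ⟨m, rfl⟩ : ∃ m, n = m+2 := ⟨n-2, by omega⟩
  have hkey := key_identity (m+2) (by omega)
  rw [show m+2-1 = m+1 by omega, show m+2-2 = m by omega,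
    show 2*(m+2)-3 = 2*m+1 by omega] at hkey
  have hcast : ((∑ p ∈ Finset.Icc 1 (2*(m+2)-2), B (m+2) p : ℕ) : ℝ) + (d (m+2) 0 : ℝ)
      + ((doubleFact (m+1) : ℕ) : ℝ) + ((2*m+1:ℕ):ℝ) * ((doubleFact m : ℕ) : ℝ)
      = ((doubleFact (m+2) : ℕ) : ℝ) + ((2*(m+2)-2:ℕ):ℝ) * ((doubleFact (m+1) : ℕ) : ℝ) := by
    exact_mod_cast hkey
  have hd1 : ((doubleFact (m+2) : ℕ) : ℝ) = ((2*m+3:ℕ):ℝ) * ((doubleFact (m+1) : ℕ) : ℝ) := by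
    have h : doubleFact (m+2) = (2*m+3) * doubleFact (m+1) := by
      rw [show (2:ℕ)*m+3 = 2*(m+1)+1 by omega]
      exact doubleFact_succ (m+1)
    exact_mod_cast h
  have hd2 : ((doubleFact (m+1) : ℕ) : ℝ) = ((2*m+1:ℕ):ℝ) * ((doubleFact m : ℕ) : ℝ) := by
    have h : doubleFact (m+1) = (2*m+1) * doubleFact m := doubleFact_succ m
    exact_mod_cast h
  have hS : ((∑ p ∈ Finset.Icc 1 (2*(m+2)-2), B (m+2) p : ℕ) : ℝ)
      = ((doubleFact (m+2) : ℕ) : ℝ) + ((2*(m+2)-2:ℕ):ℝ) * ((doubleFact (m+1) : ℕ) : ℝ)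
        - (d (m+2) 0 : ℝ) - ((doubleFact (m+1) : ℕ) : ℝ)
        - ((2*m+1:ℕ):ℝ) * ((doubleFact m : ℕ) : ℝ) := by
    linarith
  rw [show 2*(m+2)-2 = 2*m+2 by omega] at hS ⊢
  rw [show 2*(m+2)-1 = 2*m+3 by omega]
  rw [hS, hd1, hd2]
  have hA : ((2*m+3:ℕ):ℝ) ≠ 0 := by positivity
  have hB : ((2*m+1:ℕ):ℝ) ≠ 0 := by positivity
  have hDFm : ((doubleFact m : ℕ) : ℝ) ≠ 0 := by
    exact_mod_cast (doubleFact_pos m).ne'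
  push_cast
  push_cast at hA hB hDFm
  field_simp
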